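/- Let A : V → V* be a bounded linear operator, let Q : V* → V be the natural (Riesz) identification of V* with V (so ⟨v, v*⟩ = (v, Q v*)_V), let n ≥ 1 be an integer, S_n = n R_n, and Aⁿu := n (Q A S_n u − S_n Q A S_n u) for u ∈ H. Then for every u ∈ H one has 2 (u, Aⁿ u)_H = 2 ⟨S_n u, A S_n u⟩. Consequently, if there is δ > 0 with 2⟨v, A v⟩ ≤ −δ ‖v‖_V² for all v ∈ V, then 2 (u, Aⁿ u)_H ≤ −δ ‖S_n u‖_V² for every u ∈ H. -/

import Mathlib

open scoped RealInnerProductSpace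

/-- With `A : V → V*` bounded, `Q` the Riesz identification of `V*` with `V`,
`S_n = n R_n` and `Aⁿu = n (Q A S_n u − S_n Q A S_n u)`, one has
`2 (u, Aⁿ u)_H = 2 ⟨S_n u, A S_n u⟩` for every `u ∈ H`; consequently, if
`2⟨v, A v⟩ ≤ −δ ‖v‖_V²` for all `v ∈ V` with some `δ > 0`, then
`2 (u, Aⁿ u)_H ≤ −δ ‖S_n u‖_V²` for every `u ∈ H`. -/
theorem stmt10
    {V H : Type*} [NormedAddCommGroup V] [InnerProductSpace ℝ V] [CompleteSpace V]
    [NormedAddCommGroup H] [InnerProductSpace ℝ H] [CompleteSpace H]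
    (ι : V →L[ℝ] H) (hinj : Function.Injective ι) (hdense : DenseRange ι)
    (hcontr : ∀ u : V, ‖ι u‖ ≤ ‖u‖)
    (R : ℝ → H → V)
    (hR : ∀ lam : ℝ, 0 ≤ lam → ∀ f : H, ∀ u : V,
      ⟪f, ι u⟫ = lam * ⟪ι (R lam f), ι u⟫ + ⟪R lam f, u⟫)
    (A : V →L[ℝ] StrongDual ℝ V)
    (n : ℕ) (hn : 1 ≤ n) :
    let Q : StrongDual ℝ V → V := fun φ => (InnerProductSpace.toDual ℝ V).symm φ
    let Sn : H → V := fun h => (n : ℝ) • R (n : ℝ) h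
    let An : H → V := fun u => (n : ℝ) • (Q (A (Sn u)) - Sn (ι (Q (A (Sn u)))))
    (∀ u : H, 2 * ⟪u, ι (An u)⟫ = 2 * A (Sn u) (Sn u)) ∧
      (∀ δ : ℝ, 0 < δ → (∀ v : V, 2 * A v v ≤ -δ * ‖v‖ ^ 2) →
        ∀ u : H, 2 * ⟪u, ι (An u)⟫ ≤ -δ * ‖Sn u‖ ^ 2) := by
  intro Q Sn An
  have hQ : ∀ (φ : StrongDual ℝ V) (v : V), ⟪Q φ, v⟫ = φ v := fun φ v =>
    InnerProductSpace.toDual_symm_apply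
  have hn0 : (0:ℝ) ≤ (n:ℝ) := by positivity
  have key : ∀ u : H, ⟪u, ι (An u)⟫ = A (Sn u) (Sn u) := by
    intro u
    set w := A (Sn u) with hw
    set g := ι (Q w) with hg
    have hsym : ⟪u, ι (R (n:ℝ) g)⟫ = ⟪g, ι (R (n:ℝ) u)⟫ := by
      have h1 := hR (n:ℝ) hn0 u (R (n:ℝ) g)
      have h2 := hR (n:ℝ) hn0 g (R (n:ℝ) u)
      rw [h1, h2, real_inner_comm (ι (R (n:ℝ) u)) (ι (R (n:ℝ) g)),
        real_inner_comm (R (n:ℝ) u) (R (n:ℝ) g)]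
    have h3 := hR (n:ℝ) hn0 u (Q w)
    have hstep : ⟪u, ι (An u)⟫ = (n:ℝ) * (⟪u, ι (Q w)⟫ - (n:ℝ) * ⟪u, ι (R (n:ℝ) g)⟫) := by
      show ⟪u, ι ((n:ℝ) • (Q w - (n:ℝ) • R (n:ℝ) g))⟫ = _
      simp only [map_smul, map_sub, inner_smul_right, inner_sub_right]
    have h5 : A (Sn u) (Sn u) = (n:ℝ) * ⟪R (n:ℝ) u, Q w⟫ := by
      have : w (Sn u) = ⟪Q w, Sn u⟫ := (hQ w (Sn u)).symm
      rw [← hw, this]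
      show ⟪Q w, (n:ℝ) • R (n:ℝ) u⟫ = _
      rw [real_inner_smul_right, real_inner_comm]
    rw [hstep, h3, hsym, h5, hg, real_inner_comm (ι (Q w)) (ι (R (n:ℝ) u))]
    ring
  constructor
  · intro u; rw [key u]
  · intro δ hδ hA u
    have := hA (Sn u)
    calc 2 * ⟪u, ι (An u)⟫ = 2 * A (Sn u) (Sn u) := by rw [key u]
    _ ≤ -δ * ‖Sn u‖ ^ 2 := this
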